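/- Let H be a real Hilbert space, F ⊆ H a finite-dimensional subspace, and A : D ⊆ H → H a self-adjoint Fredholm operator with F^⊥ ∩ ker A = {0}. Let L = {(P_F u, Au) : u ∈ A^{-1}(F)} ⊆ F × F be the symplectic reduction of Graph(A), and let M ⊆ F × F be a Lagrangian subspace transverse to both {0} × F and L, so that M = Graph(-R) for a symmetric operator R on F. Then, with K = I_F R P_F (where P_F is the orthogonal projection onto F and I_F the inclusion of F into H), the operator A + K : D → H is injective, hence bijective with bounded inverse. -/

import Mathlib

open RealInnerProductSpace
open Filter Topology

set_option synthInstance.maxHeartbeats 1000000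
set_option maxHeartbeats 1000000

/-- Let `A` be a densely defined self-adjoint Fredholm operator, `F` a
finite-dimensional subspace with `F^⊥ ∩ ker A = {0}`, and let
`L = {(P_F u, A u) : u ∈ A⁻¹(F)} ⊆ F × F` be the symplectic reduction of the
graph of `A`.  If `M = Graph(-R)` (with `R` symmetric on `F`) is a Lagrangian
subspace of `F × F` transverse to `L`, then with `K = I_F R P_F` the operator
`A + K` is injective, hence bijective with bounded inverse. -/
theorem statement18 {H : Type*} [NormedAddCommGroup H] [InnerProductSpace ℝ H] [CompleteSpace H]
    (A : H →ₗ.[ℝ] H) (hd : Dense (A.domain : Set H)) (hsa : A.adjoint = A)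
    (hker : FiniteDimensional ℝ ↥(LinearMap.ker A.toFun))
    (hrange : IsClosed ((LinearMap.range A.toFun : Submodule ℝ H) : Set H))
    (hcoker : FiniteDimensional ℝ (H ⧸ LinearMap.range A.toFun))
    (F : Submodule ℝ H) [FiniteDimensional ℝ F]
    (hFker : ∀ x : A.domain, (x : H) ∈ Fᗮ → A x = 0 → (x : H) = 0)
    (R : F →ₗ[ℝ] F)
    (hRsym : ∀ u v : F, ⟪((R u : F) : H), (v : H)⟫ = ⟪(u : H), ((R v : F) : H)⟫)
    -- transversality of `M = Graph (-R)` and the reduction `L` of the graph of `A`: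
    (htrans : ∀ x : A.domain, ∀ u : F, A x ∈ F →
      (((Submodule.orthogonalProjectionOnto F (x : H) : F) : H), A x) = (((u : F) : H), -((R u : F) : H)) →
      ((u : F) : H) = 0 ∧ A x = 0) :
    (∀ x : A.domain, A x + ((R (Submodule.orthogonalProjectionOnto F (x : H)) : F) : H) = 0 → (x : H) = 0) ∧
    ∃ B : H →L[ℝ] H,
      (∀ x : A.domain, B (A x + ((R (Submodule.orthogonalProjectionOnto F (x : H)) : F) : H)) = (x : H)) ∧
      (∀ y : H, ∃ x : A.domain,
        (x : H) = B y ∧ A x + ((R (Submodule.orthogonalProjectionOnto F (x : H)) : F) : H) = y) := by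
  classical
  -- the finite-rank perturbation `K`
  obtain ⟨K, hK, hKsym⟩ : ∃ K : H →L[ℝ] H,
      (∀ z : H, K z = ((R (Submodule.orthogonalProjectionOnto F z) : F) : H)) ∧
      (∀ z w : H, ⟪K z, w⟫ = ⟪z, K w⟫) := by
    refine ⟨F.subtypeL.comp ((LinearMap.toContinuousLinearMap R).comp (Submodule.orthogonalProjectionOnto F)),
      fun z => rfl, fun z w => ?_⟩
    show ⟪((R (Submodule.orthogonalProjectionOnto F z) : F) : H), w⟫
        = ⟪z, ((R (Submodule.orthogonalProjectionOnto F w) : F) : H)⟫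
    have h1 := Submodule.inner_orthogonalProjectionOnto_eq_of_mem_left (𝕜 := ℝ) (K := F)
        (R (Submodule.orthogonalProjectionOnto F z)) w
    have h2 := Submodule.inner_orthogonalProjectionOnto_eq_of_mem_right (𝕜 := ℝ) (K := F)
        (R (Submodule.orthogonalProjectionOnto F w)) z
    rw [← h1, ← h2]
    exact hRsym _ _
  -- symmetry of `A`
  have hsym : ∀ x y : A.domain, ⟪A x, (y : H)⟫ = ⟪(x : H), A y⟫ := by
    intro x y
    have hle : A ≤ A.adjoint := le_of_eq hsa.symm
    have h := LinearPMap.adjoint_isFormalAdjoint hd (⟨(x : H), hle.1 x.2⟩ : A.adjoint.domain) y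
    rwa [show A.adjoint ⟨(x : H), hle.1 x.2⟩ = A x from ((le_of_eq hsa).2 rfl)] at h
  -- the adjoint trick: a vector pairing correctly against the graph lies in the domain
  have hadj : ∀ z w : H, (∀ x : A.domain, ⟪w, (x : H)⟫ = ⟪z, A x⟫) →
      ∃ z' : A.domain, (z' : H) = z ∧ A z' = w := by
    intro z w h
    have hz : z ∈ A.adjoint.domain := LinearPMap.mem_adjoint_domain_of_exists z ⟨w, h⟩
    have hval : A.adjoint ⟨z, hz⟩ = w := LinearPMap.adjoint_apply_eq hd ⟨z, hz⟩ h
    have hle : A.adjoint ≤ A := le_of_eq hsa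
    exact ⟨⟨z, hle.1 hz⟩, rfl, by rw [← hval]; exact (hle.2 rfl).symm⟩
  -- closedness of `A`
  have hclosed : ∀ (f : ℕ → A.domain) (x y : H),
      Tendsto (fun n => ((f n : H))) atTop (𝓝 x) →
      Tendsto (fun n => A (f n)) atTop (𝓝 y) →
      ∃ x' : A.domain, (x' : H) = x ∧ A x' = y := by
    intro f x y hfx hfy
    refine hadj x y fun v => ?_
    have h1 : Tendsto (fun n => ⟪A (f n), (v : H)⟫) atTop (𝓝 ⟪y, (v : H)⟫) :=
      (Continuous.inner continuous_id continuous_const).continuousAt.tendsto.comp hfy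
    have h2 : Tendsto (fun n => ⟪(f n : H), A v⟫) atTop (𝓝 ⟪x, A v⟫) :=
      (Continuous.inner continuous_id continuous_const).continuousAt.tendsto.comp hfx
    have : (fun n => ⟪A (f n), (v : H)⟫) = fun n => ⟪(f n : H), A v⟫ :=
      funext fun n => hsym (f n) v
    rw [this] at h1
    exact tendsto_nhds_unique h1 h2
  -- injectivity of `A + K`
  have hinj : ∀ x : A.domain, A x + K (x : H) = 0 → (x : H) = 0 := by
    intro x hx
    have hAxK : A x = -K (x : H) := eq_neg_of_add_eq_zero_left hx
    have hAxF : A x ∈ F := by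
      rw [hAxK, hK]; exact neg_mem (R (Submodule.orthogonalProjectionOnto F (x : H))).2
    obtain ⟨hu, hAx0⟩ := htrans x (Submodule.orthogonalProjectionOnto F (x : H)) hAxF
      (by rw [hAxK, hK])
    have hxF : (x : H) ∈ Fᗮ := by
      rw [← Submodule.orthogonalProjectionOnto_eq_zero_iff (K := F)]
      exact_mod_cast hu
    exact hFker x hxF hAx0
  -- the kernel of `A` as a subspace of `H`
  set N : Submodule ℝ H := (LinearMap.ker A.toFun).map A.domain.subtype with hNdef
  haveI : FiniteDimensional ℝ N := Module.Finite.map _ _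
  have hNlift : ∀ p ∈ N, ∃ p' : A.domain, (p' : H) = p ∧ A p' = 0 := by
    rintro p ⟨x, hx, rfl⟩
    exact ⟨x, rfl, hx⟩
  have hNmem : ∀ x : A.domain, A x = 0 → (x : H) ∈ N := fun x hx => ⟨x, hx, rfl⟩
  -- minimal modulus of `A` on the orthogonal complement of its kernel
  obtain ⟨c₀, hc₀0, hc₀⟩ : ∃ c₀ : ℝ, 0 ≤ c₀ ∧
      ∀ x : A.domain, (x : H) ∈ Nᗮ → ‖(x : H)‖ ≤ c₀ * ‖A x‖ := by
    classical
    -- two elements of the domain with equal image and both coords in `Nᗮ` are equal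
    have huniq : ∀ x x' : A.domain, (x : H) ∈ Nᗮ → (x' : H) ∈ Nᗮ → A x = A x' →
        (x : H) = (x' : H) := by
      intro x x' hx hx' hA
      have hmem : ((x - x' : A.domain) : H) ∈ N := hNmem _ (by rw [A.map_sub, hA, sub_self])
      have hmem' : ((x - x' : A.domain) : H) ∈ Nᗮ := by
        push_cast
        exact Submodule.sub_mem _ hx hx'
      have h0 : ((x - x' : A.domain) : H) = 0 := by
        have := hmem' _ hmem
        rwa [inner_self_eq_zero] at this
      have : (x : H) - (x' : H) = 0 := by push_cast at h0; exact h0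
      exact sub_eq_zero.mp this
    set D₀ : Submodule ℝ A.domain := Nᗮ.comap A.domain.subtype with hD₀
    set A₀ : D₀ →ₗ[ℝ] H := A.toFun.domRestrict D₀ with hA₀
    have hA₀app : ∀ x : D₀, A₀ x = A (x : A.domain) := fun x => rfl
    have hinj₀ : Function.Injective A₀ := by
      intro x y hxy
      exact Subtype.coe_injective (Subtype.coe_injective (huniq x y x.2 y.2 hxy))
    have hrangeEq : LinearMap.range A₀ = LinearMap.range A.toFun := by
      apply le_antisymm
      · rintro _ ⟨x, rfl⟩; exact ⟨x, rfl⟩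
      · rintro _ ⟨x, rfl⟩
        obtain ⟨p', hp'1, hp'2⟩ := hNlift (Submodule.orthogonalProjectionOnto N (x : H)) (SetLike.coe_mem _)
        have hq : ((x - p' : A.domain) : H) ∈ Nᗮ := by
          push_cast
          rw [hp'1]
          exact Submodule.sub_starProjection_mem_orthogonal (K := N) (x : H)
        refine ⟨⟨x - p', hq⟩, ?_⟩
        show A (x - p') = A.toFun x
        rw [A.map_sub, hp'2, sub_zero]; rfl
    set e₀ := LinearEquiv.ofInjective A₀ hinj₀ with he₀
    set cast := LinearEquiv.ofEq _ _ hrangeEq.symm with hcast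
    set S : ↥(LinearMap.range A.toFun) →ₗ[ℝ] H :=
      A.domain.subtype.comp (D₀.subtype.comp (e₀.symm.toLinearMap.comp cast.toLinearMap)) with hS
    have hSkey : ∀ y : ↥(LinearMap.range A.toFun),
        ∃ x' : A.domain, (x' : H) = S y ∧ (x' : H) ∈ Nᗮ ∧ A x' = (y : H) := by
      intro y
      set d : D₀ := e₀.symm (cast y) with hd
      refine ⟨(d : A.domain), rfl, d.2, ?_⟩
      have h1 : A₀ d = ((cast y : LinearMap.range A₀) : H) := by
        rw [hd]
        have := e₀.apply_symm_apply (cast y)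
        calc A₀ (e₀.symm (cast y)) = ((e₀ (e₀.symm (cast y)) : LinearMap.range A₀) : H) := rfl
          _ = ((cast y : LinearMap.range A₀) : H) := by rw [this]
      have h2 : ((cast y : LinearMap.range A₀) : H) = (y : H) := rfl
      rw [← hA₀app]
      rw [h1]
      exact h2
    haveI : CompleteSpace ↥(LinearMap.range A.toFun) := hrange.completeSpace_coe
    have hScont : Continuous S := by
      apply LinearMap.continuous_of_seq_closed_graph
      intro u y z hu hz
      choose x hx1 hx2 hx3 using fun n => hSkey (u n)
      have hxz : Tendsto (fun n => ((x n : H))) atTop (𝓝 z) := by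
        rw [funext hx1]; exact hz
      have hxy : Tendsto (fun n => A (x n)) atTop (𝓝 (y : H)) := by
        have : Tendsto (fun n => ((u n : H))) atTop (𝓝 (y : H)) :=
          (continuous_subtype_val.tendsto y).comp hu
        simpa [funext hx3] using this
      obtain ⟨x', hx'1, hx'2⟩ := hclosed x z (y : H) hxz hxy
      have hzN : z ∈ Nᗮ := by
        have hcl : IsClosed (Nᗮ : Set H) := Submodule.isClosed_orthogonal N
        exact hcl.mem_of_tendsto hxz (Eventually.of_forall fun n => hx2 n)
      obtain ⟨xy, hxy1, hxy2, hxy3⟩ := hSkey y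
      have := huniq x' xy (hx'1 ▸ hzN) hxy2 (by rw [hx'2, hxy3])
      rw [hx'1, hxy1] at this
      exact this
    set J : ↥(LinearMap.range A.toFun) →L[ℝ] H := ⟨S, hScont⟩ with hJ
    refine ⟨‖J‖, ContinuousLinearMap.opNorm_nonneg J, fun x hx => ?_⟩
    set y : ↥(LinearMap.range A.toFun) := ⟨A x, LinearMap.mem_range_self _ x⟩ with hy
    obtain ⟨xy, hxy1, hxy2, hxy3⟩ := hSkey y
    have hxx : (x : H) = S y := by
      rw [← hxy1]
      exact huniq x xy hx hxy2 (by rw [hxy3])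
    calc ‖(x : H)‖ = ‖J y‖ := by rw [hxx]; rfl
      _ ≤ ‖J‖ * ‖y‖ := J.le_opNorm y
      _ = ‖J‖ * ‖A x‖ := rfl
  -- the perturbed operator
  set T : A.domain →ₗ[ℝ] H := A.toFun + K.toLinearMap.comp A.domain.subtype with hTdef
  have hTapp : ∀ x : A.domain, T x = A x + K (x : H) := fun x => rfl
  -- a priori bound for `T`
  obtain ⟨c, hcpos, hc⟩ : ∃ c : ℝ, 0 < c ∧ ∀ x : A.domain, ‖(x : H)‖ ≤ c * ‖T x‖ := by
    classical
    by_contra hcon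
    push_neg at hcon
    have hcon' : ∀ n : ℕ, ∃ x : A.domain, ((n : ℝ) + 1) * ‖T x‖ < ‖(x : H)‖ := fun n =>
      hcon ((n : ℝ) + 1) (by positivity)
    choose x₀ hx₀ using hcon'
    have hx₀pos : ∀ n, 0 < ‖(x₀ n : H)‖ := fun n =>
      lt_of_le_of_lt (by positivity) (hx₀ n)
    set u : ℕ → A.domain := fun n => ‖(x₀ n : H)‖⁻¹ • x₀ n with hu
    have hucoe : ∀ n, ((u n : H)) = ‖(x₀ n : H)‖⁻¹ • ((x₀ n : H)) := fun n => rfl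
    have hunorm : ∀ n, ‖(u n : H)‖ = 1 := by
      intro n
      rw [hucoe, norm_smul, norm_inv, norm_norm, inv_mul_cancel₀ (hx₀pos n).ne']
    -- `T (u n) → 0`
    have hTu : Tendsto (fun n => T (u n)) atTop (𝓝 0) := by
      rw [tendsto_zero_iff_norm_tendsto_zero]
      apply squeeze_zero (fun n => norm_nonneg _) ?_ tendsto_one_div_add_atTop_nhds_zero_nat
      intro n
      have hn1 : (0 : ℝ) < (n : ℝ) + 1 := by positivity
      have hle := (hx₀ n).le
      have heq : ‖T (u n)‖ = ‖(x₀ n : H)‖⁻¹ * ‖T (x₀ n)‖ := by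
        rw [hu]; simp only [map_smul, norm_smul, norm_inv, norm_norm]
      rw [heq]
      calc ‖(x₀ n : H)‖⁻¹ * ‖T (x₀ n)‖
          ≤ ‖(x₀ n : H)‖⁻¹ * (‖(x₀ n : H)‖ / ((n : ℝ) + 1)) := by
            apply mul_le_mul_of_nonneg_left _ (inv_nonneg.mpr (norm_nonneg _))
            rw [le_div_iff₀ hn1]
            nlinarith [hle]
        _ = 1 / ((n : ℝ) + 1) := by
            field_simp
            rw [div_self (hx₀pos n).ne']
    -- extract a convergent subsequence of `K (u n)` inside `F`
    set v : ℕ → F := fun n => R (Submodule.orthogonalProjectionOnto F ((u n : H))) with hv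
    have hKv : ∀ n, K ((u n : H)) = ((v n : F) : H) := fun n => hK _
    have hvbdd : ∀ n, v n ∈ Metric.closedBall (0 : F) ‖K‖ := by
      intro n
      rw [Metric.mem_closedBall, dist_zero_right]
      have h1 : ‖v n‖ = ‖K ((u n : H))‖ := by rw [hKv n]; rfl
      rw [h1]
      calc ‖K ((u n : H))‖ ≤ ‖K‖ * ‖(u n : H)‖ := K.le_opNorm _
        _ = ‖K‖ := by rw [hunorm, mul_one]
    obtain ⟨f0, hf0mem, φ, hφmono, hφtend⟩ :=
      (isCompact_closedBall (0 : F) ‖K‖).tendsto_subseq hvbdd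
    -- extract a convergent subsequence of the projections onto `N`
    set p : ℕ → N := fun n => Submodule.orthogonalProjectionOnto N ((u (φ n) : H)) with hp
    have hpbdd : ∀ n, p n ∈ Metric.closedBall (0 : N) 1 := by
      intro n
      rw [Metric.mem_closedBall, dist_zero_right]
      calc ‖p n‖ ≤ ‖Submodule.orthogonalProjectionOnto N‖ * ‖(u (φ n) : H)‖ :=
          (Submodule.orthogonalProjectionOnto N).le_opNorm _
        _ ≤ 1 * 1 := by
            apply mul_le_mul (Submodule.orthogonalProjectionOnto_norm_le N) (le_of_eq (hunorm _))
              (norm_nonneg _) zero_le_one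
        _ = 1 := mul_one 1
    obtain ⟨plim, hplimmem, ψ, hψmono, hψtend⟩ :=
      (isCompact_closedBall (0 : N) 1).tendsto_subseq hpbdd
    -- the doubly-extracted subsequence
    set w : ℕ → A.domain := fun n => u (φ (ψ n)) with hw
    have hTw : Tendsto (fun n => T (w n)) atTop (𝓝 0) :=
      hTu.comp ((hφmono.comp hψmono).tendsto_atTop)
    have hKw : Tendsto (fun n => K ((w n : H))) atTop (𝓝 ((f0 : F) : H)) := by
      have h1 : Tendsto (fun n => v (φ (ψ n))) atTop (𝓝 f0) :=
        hφtend.comp hψmono.tendsto_atTop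
      have h2 : Tendsto (fun n => ((v (φ (ψ n)) : F) : H)) atTop (𝓝 ((f0 : F) : H)) :=
        (continuous_subtype_val.tendsto f0).comp h1
      have h3 : (fun n => K ((w n : H))) = fun n => ((v (φ (ψ n)) : F) : H) :=
        funext fun n => hKv _
      rw [h3]
      exact h2
    have hAw : Tendsto (fun n => A (w n)) atTop (𝓝 (-((f0 : F) : H))) := by
      have : (fun n => A (w n)) = fun n => T (w n) - K ((w n : H)) := by
        funext n; rw [hTapp]; exact (add_sub_cancel_right _ _).symm
      rw [this]
      simpa using hTw.sub hKw
    -- lift the projections to the domain and form the `Nᗮ` parts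
    choose p' hp'coe hp'A using fun n => hNlift ((p (ψ n) : N) : H) (SetLike.coe_mem _)
    set q : ℕ → A.domain := fun n => w n - p' n with hq
    have hqmem : ∀ n, ((q n : H)) ∈ Nᗮ := by
      intro n
      have : ((q n : H)) = ((w n : H)) - Submodule.orthogonalProjectionOnto N ((w n : H)) := by
        rw [hq]; push_cast; rw [hp'coe n]
      rw [this]
      exact Submodule.sub_starProjection_mem_orthogonal _
    have hAq : ∀ n, A (q n) = A (w n) := by
      intro n
      rw [hq]
      show A (w n - p' n) = A (w n)
      rw [A.map_sub, hp'A, sub_zero]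
    -- `(q n : H)` is Cauchy via the minimal-modulus bound
    have hAqcau : CauchySeq (fun n => A (q n)) := by
      have : Tendsto (fun n => A (q n)) atTop (𝓝 (-((f0 : F) : H))) := by
        simpa [funext hAq] using hAw
      exact this.cauchySeq
    have hqcau : CauchySeq (fun n => ((q n : H))) := by
      rw [Metric.cauchySeq_iff]
      intro ε hε
      rw [Metric.cauchySeq_iff] at hAqcau
      obtain ⟨M, hM⟩ := hAqcau (ε / (c₀ + 1)) (by positivity)
      refine ⟨M, fun m hm n hn => ?_⟩
      have h1 : dist ((q m : H)) ((q n : H)) ≤ c₀ * dist (A (q m)) (A (q n)) := by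
        rw [dist_eq_norm, dist_eq_norm]
        have h2 : ((q m : H)) - ((q n : H)) = ((q m - q n : A.domain) : H) := by push_cast; ring
        have h3 : A (q m) - A (q n) = A (q m - q n) := (A.map_sub _ _).symm
        rw [h2, h3]
        exact hc₀ _ (by rw [← h2]; exact Submodule.sub_mem _ (hqmem m) (hqmem n))
      have h4 := hM m hm n hn
      calc dist ((q m : H)) ((q n : H)) ≤ c₀ * dist (A (q m)) (A (q n)) := h1
        _ ≤ (c₀ + 1) * dist (A (q m)) (A (q n)) := by
            have hd : (0 : ℝ) ≤ dist (A (q m)) (A (q n)) := dist_nonneg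
            nlinarith
        _ < (c₀ + 1) * (ε / (c₀ + 1)) := by
            apply mul_lt_mul_of_pos_left h4
            linarith
        _ = ε := by
            field_simp
    obtain ⟨qlim, hqlim⟩ := cauchySeq_tendsto_of_complete hqcau
    -- `w n → qlim + plim`
    have hwcoe : Tendsto (fun n => ((w n : H))) atTop (𝓝 (qlim + ((plim : N) : H))) := by
      have h1 : Tendsto (fun n => ((p (ψ n) : N) : H)) atTop (𝓝 ((plim : N) : H)) :=
        (continuous_subtype_val.tendsto plim).comp hψtend
      have h2 : (fun n => ((w n : H))) = fun n => ((q n : H)) + ((p (ψ n) : N) : H) := by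
        funext n
        rw [hq]; push_cast; rw [hp'coe n]; exact (sub_add_cancel _ _).symm
      rw [h2]
      exact hqlim.add h1
    obtain ⟨x', hx'coe, hx'A⟩ := hclosed w (qlim + ((plim : N) : H)) (-((f0 : F) : H)) hwcoe hAw
    -- `K x' = f0`
    have hKx' : K ((x' : H)) = ((f0 : F) : H) := by
      have h1 : Tendsto (fun n => K ((w n : H))) atTop (𝓝 (K (qlim + ((plim : N) : H)))) :=
        (K.continuous.tendsto _).comp hwcoe
      rw [hx'coe]
      exact tendsto_nhds_unique h1 hKw
    have hx'0 : (x' : H) = 0 := hinj x' (by rw [hx'A, hKx', neg_add_cancel])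
    -- but `‖x'‖ = 1`
    have hnorm1 : ‖(x' : H)‖ = 1 := by
      have h1 : Tendsto (fun n => ‖((w n : H))‖) atTop (𝓝 ‖(x' : H)‖) := by
        rw [hx'coe]
        exact (continuous_norm.tendsto _).comp hwcoe
      have h2 : (fun n => ‖((w n : H))‖) = fun _ => (1 : ℝ) := funext fun n => hunorm _
      rw [h2] at h1
      exact (tendsto_const_nhds_iff.mp h1).symm
    rw [hx'0, norm_zero] at hnorm1
    exact zero_ne_one hnorm1
  -- range of `T` is everything
  have hrTtop : LinearMap.range T = ⊤ := by
    classical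
    have hrT : IsClosed ((LinearMap.range T : Submodule ℝ H) : Set H) := by
      apply IsSeqClosed.isClosed
      intro f y hf hfy
      choose x hx using hf
      have hxcau : CauchySeq (fun n => ((x n : H))) := by
        rw [Metric.cauchySeq_iff]
        intro ε hε
        have hfc := hfy.cauchySeq
        rw [Metric.cauchySeq_iff] at hfc
        obtain ⟨M, hM⟩ := hfc (ε / (c + 1)) (by positivity)
        refine ⟨M, fun m hm n hn => ?_⟩
        have h1 : dist ((x m : H)) ((x n : H)) ≤ c * dist (f m) (f n) := by
          rw [dist_eq_norm, dist_eq_norm, ← hx m, ← hx n]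
          have h2 : ((x m : H)) - ((x n : H)) = ((x m - x n : A.domain) : H) := by push_cast; ring
          rw [h2, ← map_sub]
          exact hc _
        have h4 := hM m hm n hn
        have hd : (0 : ℝ) ≤ dist (f m) (f n) := dist_nonneg
        calc dist ((x m : H)) ((x n : H)) ≤ c * dist (f m) (f n) := h1
          _ ≤ (c + 1) * dist (f m) (f n) := by nlinarith
          _ < (c + 1) * (ε / (c + 1)) := by apply mul_lt_mul_of_pos_left h4; linarith
          _ = ε := by field_simp
      obtain ⟨z, hz⟩ := cauchySeq_tendsto_of_complete hxcau
      have hAx : Tendsto (fun n => A (x n)) atTop (𝓝 (y - K z)) := by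
        have h1 : (fun n => A (x n)) = fun n => f n - K ((x n : H)) := by
          funext n
          rw [← hx n, hTapp]
          exact (add_sub_cancel_right _ _).symm
        rw [h1]
        exact hfy.sub ((K.continuous.tendsto _).comp hz)
      obtain ⟨x', hx'coe, hx'A⟩ := hclosed x z (y - K z) hz hAx
      refine ⟨x', ?_⟩
      rw [hTapp, hx'A, hx'coe]
      exact sub_add_cancel y (K z)
    have horth : (LinearMap.range T)ᗮ = ⊥ := by
      rw [Submodule.eq_bot_iff]
      intro z hz
      rw [Submodule.mem_orthogonal] at hz
      have h : ∀ x : A.domain, ⟪-K z, (x : H)⟫ = ⟪z, A x⟫ := by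
        intro x
        have h0 : ⟪T x, z⟫ = 0 := hz (T x) (LinearMap.mem_range_self _ x)
        rw [hTapp, inner_add_left] at h0
        have h1 : ⟪K ((x : H)), z⟫ = ⟪K z, (x : H)⟫ := by
          rw [real_inner_comm z (K (x : H)), hKsym]
        rw [h1] at h0
        have h2 : ⟪z, A x⟫ = ⟪A x, z⟫ := real_inner_comm _ _
        rw [inner_neg_left, h2]
        linarith [h0]
      obtain ⟨z', hz'coe, hz'A⟩ := hadj z (-K z) h
      have : (z' : H) = 0 := hinj z' (by rw [hz'A, hz'coe, neg_add_cancel])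
      rw [← hz'coe]; exact this
    haveI : CompleteSpace (LinearMap.range T : Submodule ℝ H) := hrT.completeSpace_coe
    exact Submodule.orthogonal_eq_bot_iff.mp horth
  -- conclusion
  have hTinj : Function.Injective T := by
    intro x y hxy
    have h0 : T (x - y) = 0 := by rw [map_sub, hxy, sub_self]
    have := hinj (x - y) (by rw [← hTapp]; exact h0)
    have hxy0 : (x : H) - (y : H) = 0 := by simpa using this
    exact Subtype.coe_injective (sub_eq_zero.mp hxy0)
  have hTbij : Function.Bijective T := ⟨hTinj, LinearMap.range_eq_top.mp hrTtop⟩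
  set e := LinearEquiv.ofBijective T hTbij with he
  set B₀ : H →ₗ[ℝ] H := A.domain.subtype.comp e.symm.toLinearMap with hB₀
  have hB₀bound : ∀ y : H, ‖B₀ y‖ ≤ c * ‖y‖ := by
    intro y
    have h1 : T (e.symm y) = y := e.apply_symm_apply y
    have := hc (e.symm y)
    rwa [h1] at this
  set B : H →L[ℝ] H := B₀.mkContinuous c hB₀bound with hB
  constructor
  · intro x hx
    refine hinj x ?_
    rwa [hK]
  · refine ⟨B, fun x => ?_, fun y => ?_⟩
    · have h1 : A x + ((R (Submodule.orthogonalProjectionOnto F (x : H)) : F) : H) = T x := by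
        rw [hTapp, hK]
      rw [h1]
      show B₀ (T x) = (x : H)
      have : e.symm (T x) = x := e.symm_apply_apply x
      simp [hB₀, this]
    · refine ⟨e.symm y, ?_, ?_⟩
      · rfl
      · have h1 : A (e.symm y) + ((R (Submodule.orthogonalProjectionOnto F ((e.symm y : A.domain) : H)) : F) : H)
            = T (e.symm y) := by rw [hTapp, hK]
        rw [h1]
        exact e.apply_symm_apply y
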